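/- Let λ ∈ (0,1) and p ∈ [0,1], and let t ≥ 1 be a natural number. Then ∏_{k=t}^∞ (1 − λ^k p) ≥ exp( − (λ^t p) / ((1 − λ)(1 − λ^t p)) ). -/

import Mathlib

set_option maxHeartbeats 1000000

/-- Corollary to Theorem 2 of the Multi-CALF paper: for `λ ∈ (0,1)`, `p ∈ [0,1]`
and `t ≥ 1`, `∏_{k=t}^∞ (1 - λ^k p) ≥ exp(-(λ^t p)/((1 - λ)(1 - λ^t p)))`. -/
theorem multiCALF_product_exp_lower_bound
    (lam p : ℝ) (hlam0 : 0 < lam) (hlam1 : lam < 1)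
    (hp0 : 0 ≤ p) (hp1 : p ≤ 1) (t : ℕ) (ht : 1 ≤ t) :
    (∏' k : ℕ, (1 - lam ^ (t + k) * p))
      ≥ Real.exp (-(lam ^ t * p) / ((1 - lam) * (1 - lam ^ t * p))) := by
  set a : ℝ := lam ^ t * p with ha
  have hpowpos : ∀ n : ℕ, 0 < lam ^ n := fun n => pow_pos hlam0 n
  have hpow1 : ∀ n : ℕ, lam ^ n ≤ 1 := fun n => pow_le_one₀ hlam0.le hlam1.le
  have ha0 : 0 ≤ a := mul_nonneg (hpowpos t).le hp0
  have ha1 : a < 1 := by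
    calc a ≤ lam ^ t * 1 := by
            exact mul_le_mul_of_nonneg_left hp1 (hpowpos t).le
      _ = lam ^ t := mul_one _
      _ ≤ lam ^ 1 := pow_le_pow_of_le_one hlam0.le hlam1.le ht
      _ < 1 := by simpa using hlam1
  set x : ℕ → ℝ := fun k => lam ^ (t + k) * p with hx
  have hx0 : ∀ k, 0 ≤ x k := fun k => mul_nonneg (hpowpos _).le hp0
  have hxa : ∀ k, x k ≤ a := by
    intro k
    have : lam ^ (t + k) ≤ lam ^ t := by
      rw [pow_add]
      calc lam ^ t * lam ^ k ≤ lam ^ t * 1 :=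
            mul_le_mul_of_nonneg_left (hpow1 k) (hpowpos t).le
        _ = lam ^ t := mul_one _
    exact mul_le_mul_of_nonneg_right this hp0
  have hx1 : ∀ k, x k < 1 := fun k => lt_of_le_of_lt (hxa k) ha1
  -- the per-factor bound
  have key : ∀ k, Real.exp (-(x k) / (1 - a)) ≤ 1 - x k := by
    intro k
    have h1a : 0 < 1 - a := by linarith
    have h1x : 0 < 1 - x k := by linarith [hx1 k]
    have step1 : -(x k) / (1 - a) ≤ -(x k) / (1 - x k) := by
      rw [div_le_div_iff₀ h1a h1x]
      nlinarith [hx0 k, hxa k]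
    have step2 : Real.exp (-(x k) / (1 - x k)) ≤ 1 - x k := by
      have hy : 0 ≤ x k / (1 - x k) := div_nonneg (hx0 k) h1x.le
      have hexp : 1 + x k / (1 - x k) ≤ Real.exp (x k / (1 - x k)) := by
        linarith [Real.add_one_le_exp (x k / (1 - x k))]
      have heq : 1 + x k / (1 - x k) = 1 / (1 - x k) := by
        field_simp; ring
      rw [neg_div, Real.exp_neg]
      rw [inv_le_comm₀ (Real.exp_pos _) h1x]
      calc (1 - x k)⁻¹ = 1 + x k / (1 - x k) := by rw [heq]; rw [one_div]
        _ ≤ Real.exp (x k / (1 - x k)) := hexp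
    calc Real.exp (-(x k) / (1 - a)) ≤ Real.exp (-(x k) / (1 - x k)) :=
          Real.exp_le_exp.mpr step1
      _ ≤ 1 - x k := step2
  -- sum of exponents
  have h1a : 0 < 1 - a := by linarith
  have hgeom : HasSum (fun k : ℕ => lam ^ k) (1 - lam)⁻¹ :=
    hasSum_geometric_of_lt_one hlam0.le hlam1
  have hsum : HasSum (fun k => -(x k) / (1 - a))
      (-(lam ^ t * p) / ((1 - lam) * (1 - a))) := by
    have h := hgeom.mul_left (-(lam ^ t * p) / (1 - a))
    have hfun : (fun k => -(x k) / (1 - a))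
        = fun k => (-(lam ^ t * p) / (1 - a)) * lam ^ k := by
      funext k; simp only [hx, pow_add]; ring
    have hval : (-(lam ^ t * p) / (1 - a)) * (1 - lam)⁻¹
        = -(lam ^ t * p) / ((1 - lam) * (1 - a)) := by
      field_simp
    rw [hfun, ← hval]
    exact h
  have hprodg : HasProd (fun k => Real.exp (-(x k) / (1 - a)))
      (Real.exp (-(lam ^ t * p) / ((1 - lam) * (1 - a)))) := hsum.rexp
  -- multipliability of the target product
  have hlog_sum : Summable fun k => Real.log (1 - x k) := by
    apply Summable.of_norm
    apply Summable.of_nonneg_of_le (f := fun k => x k / (1 - a))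
      (fun k => norm_nonneg _)
    · intro k
      have h1x : 0 < 1 - x k := by linarith [hx1 k]
      rw [Real.norm_eq_abs, abs_le]
      constructor
      · have := Real.exp_le_exp.mpr (le_of_eq (Real.exp_log h1x).symm) -- dummy
        have hk := key k
        have : -(x k) / (1 - a) ≤ Real.log (1 - x k) := by
          rw [← Real.log_exp (-(x k) / (1 - a))]
          exact Real.log_le_log (Real.exp_pos _) hk
        linarith [this, (neg_div (1-a) (x k)) ▸ this]
      · have hle : Real.log (1 - x k) ≤ 0 := by
          apply Real.log_nonpos (by linarith) (by linarith [hx0 k])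
        have : 0 ≤ x k / (1 - a) := div_nonneg (hx0 k) h1a.le
        linarith
    · exact ((hsum.summable).neg).congr (fun k => by ring)
  have hpos : ∀ k, 0 < 1 - x k := fun k => by linarith [hx1 k]
  have hlog_ge : ∀ k, -(x k) / (1 - a) ≤ Real.log (1 - x k) := by
    intro k
    rw [← Real.log_exp (-(x k) / (1 - a))]
    exact Real.log_le_log (Real.exp_pos _) (key k)
  have htsum := Summable.tsum_le_tsum hlog_ge hsum.summable hlog_sum
  rw [hsum.tsum_eq] at htsum
  have hprodeq : Real.exp (∑' k, Real.log (1 - x k)) = ∏' k : ℕ, (1 - x k) :=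
    Real.rexp_tsum_eq_tprod (f := fun k => 1 - x k) hpos hlog_sum
  calc (∏' k : ℕ, (1 - lam ^ (t + k) * p))
      = Real.exp (∑' k, Real.log (1 - x k)) := hprodeq.symm
    _ ≥ Real.exp (-(lam ^ t * p) / ((1 - lam) * (1 - lam ^ t * p))) :=
        Real.exp_le_exp.mpr htsum
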